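/- Let u : ℝ² → ℝ be a C¹ function (coordinates (x,t)) satisfying the inhomogeneous Burgers equation (L_u u)(x,t) = ∂u/∂t(x,t) + u(x,t)·∂u/∂x(x,t) = k for all (x,t) ∈ ℝ², where k ∈ ℝ is a constant. Then the function x ↦ u(x,0) is constant on ℝ. -/

import Mathlib

/-- The operator `L_u` acting on `v`:  `(L_u v)(x,t) = ∂v/∂t + u·∂v/∂x`,
with coordinates `(x,t)` on `ℝ × ℝ`. -/
noncomputable def Lop (u v : ℝ × ℝ → ℝ) : ℝ × ℝ → ℝ :=
  fun p => fderiv ℝ v p (0, 1) + u p * fderiv ℝ v p (1, 0)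

open Set Real

lemma charac (u : ℝ × ℝ → ℝ) (hu : ContDiff ℝ 1 u) (k : ℝ)
    (hpde : ∀ p : ℝ × ℝ, Lop u u p = k) (x0 T : ℝ) (hT : 0 ≤ T) :
    u (x0 + u (x0, 0) * T + k * T ^ 2 / 2, T) = u (x0, 0) + k * T := by
  set a := u (x0, 0) with ha
  set γ : ℝ → ℝ × ℝ := fun t => (x0 + a * t + k * t ^ 2 / 2, t) with hγ
  set f : ℝ → ℝ := fun t => u (γ t) - (a + k * t) with hf
  have hud : Differentiable ℝ u := hu.differentiable one_ne_zero
  have hγd : ∀ t : ℝ, HasDerivAt γ (a + k * t, 1) t := by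
    intro t
    have h1 : HasDerivAt (fun t : ℝ => x0 + a * t + k * t ^ 2 / 2) (a + k * t) t := by
      have h := (((hasDerivAt_const t x0).add ((hasDerivAt_const t a).mul (hasDerivAt_id t))).add
          (((hasDerivAt_const t k).mul (hasDerivAt_pow 2 t)).div_const 2))
      convert h using 1
      · rfl
      · rfl
      · rfl
      · rw [show (2:ℕ) - 1 = 1 from rfl]
        simp only [id, pow_one]
        push_cast
        ring
    exact h1.prodMk (hasDerivAt_id t)
  have key : ∀ t : ℝ, HasDerivAt f (-(fderiv ℝ u (γ t) (1, 0)) * f t) t := by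
    intro t
    have hD : HasFDerivAt u (fderiv ℝ u (γ t)) (γ t) := (hud (γ t)).hasFDerivAt
    have h2 : HasDerivAt (fun t => u (γ t)) (fderiv ℝ u (γ t) (a + k * t, 1)) t :=
      hD.comp_hasDerivAt t (hγd t)
    have h3 : HasDerivAt f (fderiv ℝ u (γ t) (a + k * t, 1) - k) t := by
      simpa [hf, Pi.add_def, Pi.mul_def, Pi.sub_def] using h2.sub (((hasDerivAt_const t a).add ((hasDerivAt_const t k).mul
        (hasDerivAt_id t))).congr_deriv (by ring))
    convert h3 using 1
    have hsplit : ((a + k * t, 1) : ℝ × ℝ) = (a + k * t) • ((1 : ℝ), (0 : ℝ)) + (0, 1) := by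
      simp [Prod.ext_iff]
    rw [hsplit, map_add, map_smul]
    have hp := hpde (γ t)
    simp only [Lop] at hp
    have : fderiv ℝ u (γ t) (0, 1) = k - u (γ t) * fderiv ℝ u (γ t) (1, 0) := by linarith
    rw [this]
    simp only [hf, smul_eq_mul]
    ring
  -- bound the coefficient on [0, T]
  have hcont : Continuous fun t => fderiv ℝ u (γ t) (1, 0) := by
    have : Continuous γ := by
      apply Continuous.prodMk <;> fun_prop
    exact ((hu.continuous_fderiv one_ne_zero).comp this).clm_apply continuous_const
  obtain ⟨C, hC⟩ := isCompact_Icc.exists_bound_of_continuousOn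
    (s := Icc (0:ℝ) T) hcont.continuousOn
  have hgron := norm_le_gronwallBound_of_norm_deriv_right_le (f := f)
    (f' := fun t => -(fderiv ℝ u (γ t) (1, 0)) * f t) (δ := 0) (K := C) (ε := 0) (a := 0) (b := T)
    (fun t _ => (key t).continuousAt.continuousWithinAt)
    (fun t _ => (key t).hasDerivWithinAt)
    (by simp [hf, hγ, ha])
    (by
      intro t ht
      have := hC t (Ico_subset_Icc_self ht)
      rw [norm_mul, norm_neg]
      have h0 : ‖f t‖ ≥ 0 := norm_nonneg _
      nlinarith [norm_nonneg (fderiv ℝ u (γ t) (1, 0))])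
  have := hgron T (right_mem_Icc.2 hT)
  rw [gronwallBound_ε0] at this
  simp only [zero_mul] at this
  have hfT : f T = 0 := by
    have := norm_le_zero_iff.1 (by linarith : ‖f T‖ ≤ 0)
    exact this
  have : u (γ T) = a + k * T := by
    have := hfT; simp only [hf] at this; linarith
  simpa [hγ] using this

lemma cross (u : ℝ × ℝ → ℝ) (hu : ContDiff ℝ 1 u) (k : ℝ)
    (hpde : ∀ p : ℝ × ℝ, Lop u u p = k) (x y : ℝ)
    (hne : u (x, 0) ≠ u (y, 0))
    (ht : 0 < (y - x) / (u (x, 0) - u (y, 0))) : False := by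
  set a := u (x, 0)
  set b := u (y, 0)
  set t := (y - x) / (a - b) with htdef
  have hab : a - b ≠ 0 := sub_ne_zero.2 hne
  have hxy : x + a * t = y + b * t := by
    have : (a - b) * t = y - x := by
      rw [htdef]; field_simp
    linarith [this]
  have h1 := charac u hu k hpde x t ht.le
  have h2 := charac u hu k hpde y t ht.le
  rw [show x + a * t + k * t ^ 2 / 2 = y + b * t + k * t ^ 2 / 2 by linarith] at h1
  have : a = b := by rw [h1] at h2; linarith
  exact hne this

theorem stmt5 (u : ℝ × ℝ → ℝ) (hu : ContDiff ℝ 1 u) (k : ℝ)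
    (hpde : ∀ p : ℝ × ℝ, Lop u u p = k) :
    ∀ x y : ℝ, u (x, 0) = u (y, 0) := by
  by_contra h
  push_neg at h
  obtain ⟨x, y, hne⟩ := h
  have hxy : x ≠ y := fun h => hne (by rw [h])
  set t := (y - x) / (u (x, 0) - u (y, 0)) with htdef
  have ht0 : t ≠ 0 := div_ne_zero (sub_ne_zero.2 (Ne.symm hxy)) (sub_ne_zero.2 hne)
  rcases lt_or_gt_of_ne ht0 with hneg | hpos
  · -- time-reversed: w p = u (-p)
    set w : ℝ × ℝ → ℝ := fun p => u (-p) with hw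
    have hwc : ContDiff ℝ 1 w := hu.comp contDiff_neg
    have hwpde : ∀ p : ℝ × ℝ, Lop w w p = -k := by
      intro p
      have hD : HasFDerivAt w ((fderiv ℝ u (-p)).comp
          (-(ContinuousLinearMap.id ℝ (ℝ × ℝ)))) p := by
        have h1 : HasFDerivAt (fun q : ℝ × ℝ => -q)
            (-(ContinuousLinearMap.id ℝ (ℝ × ℝ))) p := (hasFDerivAt_id p).neg
        exact ((hu.differentiable one_ne_zero (-p)).hasFDerivAt).comp p h1
      have hfd : fderiv ℝ w p = (fderiv ℝ u (-p)).comp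
          (-(ContinuousLinearMap.id ℝ (ℝ × ℝ))) := hD.fderiv
      have hp := hpde (-p)
      simp only [Lop, hfd, ContinuousLinearMap.comp_apply, ContinuousLinearMap.neg_apply,
        ContinuousLinearMap.id_apply, map_neg] at hp ⊢
      simp only [hw] at hp ⊢
      linarith
    have hwne : w (-x, 0) ≠ w (-y, 0) := by
      simpa [hw, Prod.neg_mk] using hne
    apply cross w hwc (-k) hwpde (-x) (-y) hwne
    have : w (-x, 0) = u (x, 0) ∧ w (-y, 0) = u (y, 0) := by
      constructor <;> simp [hw, Prod.neg_mk]
    rw [this.1, this.2]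
    have : (-y - -x) / (u (x, 0) - u (y, 0)) = -t := by
      rw [htdef]; ring
    rw [this]
    linarith
  · exact cross u hu k hpde x y hne hpos
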